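/- Let ρ₁, ρ₂ ∈ M₂(ℂ) be positive definite density matrices with ρ₁ ≠ (1/2)·1₂ and ρ₂ ≠ (1/2)·1₂, and let β > 0. Then there exist a Hermitian matrix H₁ ∈ M₂(ℂ), positive semidefinite with det H₁ = 0 and tr H₁ > 0, and Λ ∈ SL(2,ℂ), such that ρ₁ = exp(−β·H₁)/tr(exp(−β·H₁)) and ρ₂ = exp(−β·(Λ H₁ Λᴴ))/tr(exp(−β·(Λ H₁ Λᴴ))). In other words, any two non-maximally mixed thermal states on M₂(ℂ) are mapped to each other by the SL(2,ℂ) action on their thermal Hamiltonians. -/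

import Mathlib

open Matrix NormedSpace
open scoped ComplexOrder

namespace NMMAux

lemma trace_conj_eq {V D : Matrix (Fin 2) (Fin 2) ℂ} (hV : Vᴴ * V = 1) :
    (V * D * Vᴴ).trace = D.trace := by
  rw [Matrix.trace_mul_cycle, hV, one_mul]

lemma det_mul_star_det {V : Matrix (Fin 2) (Fin 2) ℂ} (hV : V * Vᴴ = 1) :
    V.det * star V.det = 1 := by
  have := congrArg Matrix.det hV
  rwa [Matrix.det_mul, Matrix.det_conjTranspose, Matrix.det_one] at this

/-- Core computation: if `ρ = V diag(p,q) Vᴴ` with `0 < q < p`, `p + q = 1`, `V` unitary,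
then `ρ` is the thermal state of `H = V diag(0,ε) Vᴴ` with `ε = (log p - log q)/β`. -/
lemma key' (β : ℝ) (hβ : 0 < β) (ρ V : Matrix (Fin 2) (Fin 2) ℂ) (p q : ℝ)
    (hq : 0 < q) (hpq : q < p) (hsum : p + q = 1)
    (hV1 : V * Vᴴ = 1) (hV2 : Vᴴ * V = 1)
    (hρ : ρ = V * diagonal ![(p : ℂ), (q : ℂ)] * Vᴴ) :
    ∃ ε : ℝ, 0 < ε ∧
      ρ = ((exp (-((β : ℂ) • (V * diagonal ![0, (ε : ℂ)] * Vᴴ)))).trace)⁻¹ •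
            exp (-((β : ℂ) • (V * diagonal ![0, (ε : ℂ)] * Vᴴ))) := by
  have hp : 0 < p := lt_trans hq hpq
  set ε : ℝ := (Real.log p - Real.log q) / β with hε_def
  have hε : 0 < ε := div_pos (sub_pos.mpr (Real.log_lt_log hq hpq)) hβ
  refine ⟨ε, hε, ?_⟩
  set Vu : (Matrix (Fin 2) (Fin 2) ℂ)ˣ := ⟨V, Vᴴ, hV1, hV2⟩ with hVu
  -- rewrite the argument of exp
  have harg : -((β : ℂ) • (V * diagonal ![0, (ε : ℂ)] * Vᴴ))
      = V * diagonal ![0, ((-(β * ε) : ℝ) : ℂ)] * Vᴴ := by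
    have h1 : -((β : ℂ) • (V * diagonal ![0, (ε : ℂ)] * Vᴴ))
        = V * (-((β : ℂ) • diagonal ![0, (ε : ℂ)])) * Vᴴ := by
      simp only [Matrix.mul_neg, Matrix.neg_mul, Matrix.mul_smul, Matrix.smul_mul]
    rw [h1]
    have h2 : -((β : ℂ) • diagonal ![0, (ε : ℂ)])
        = diagonal ![0, ((-(β * ε) : ℝ) : ℂ)] := by
      ext i j
      fin_cases i <;> fin_cases j <;>
        simp [Matrix.diagonal_apply] <;> push_cast <;> ring
    rw [h2]
  have hβε : β * ε = Real.log p - Real.log q := by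
    rw [hε_def]; field_simp
  have hexpval : Real.exp (-(β * ε)) = q / p := by
    rw [hβε, neg_sub, Real.exp_sub, Real.exp_log hq, Real.exp_log hp]
  have hexp : exp (-((β : ℂ) • (V * diagonal ![0, (ε : ℂ)] * Vᴴ)))
      = V * diagonal ![(1 : ℂ), ((q / p : ℝ) : ℂ)] * Vᴴ := by
    rw [harg]
    have hconj := Matrix.exp_units_conj Vu (diagonal ![0, ((-(β * ε) : ℝ) : ℂ)])
    have hv : (Vu : Matrix (Fin 2) (Fin 2) ℂ) = V := rfl
    have h2 : ((Vu⁻¹ : (Matrix (Fin 2) (Fin 2) ℂ)ˣ) : Matrix (Fin 2) (Fin 2) ℂ) = Vᴴ := rfl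
    rw [hv, h2] at hconj
    rw [hconj, Matrix.exp_diagonal, Pi.exp_def]
    have h3 : (fun i => exp ((![0, ((-(β * ε) : ℝ) : ℂ)] : Fin 2 → ℂ) i))
        = ![(1 : ℂ), ((q / p : ℝ) : ℂ)] := by
      funext i
      fin_cases i
      · simp [← Complex.exp_eq_exp_ℂ]
      · simp only [← Complex.exp_eq_exp_ℂ]
        show Complex.exp ((-(β * ε) : ℝ) : ℂ) = ((q / p : ℝ) : ℂ)
        rw [← Complex.ofReal_exp, hexpval]
    rw [h3]
  have hdiag : diagonal ![(1 : ℂ), ((q / p : ℝ) : ℂ)]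
      = ((p : ℝ) : ℂ)⁻¹ • diagonal ![(p : ℂ), (q : ℂ)] := by
    rw [← Matrix.diagonal_smul]
    congr 1
    funext i
    have hp' : ((p : ℝ) : ℂ) ≠ 0 := by exact_mod_cast hp.ne'
    fin_cases i <;> simp <;> field_simp <;> push_cast <;> ring
  have hexp' : exp (-((β : ℂ) • (V * diagonal ![0, (ε : ℂ)] * Vᴴ)))
      = ((p : ℝ) : ℂ)⁻¹ • ρ := by
    rw [hexp, hdiag, Matrix.mul_smul, Matrix.smul_mul, ← hρ]
  have htrρ : ρ.trace = 1 := by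
    rw [hρ, trace_conj_eq hV2, Matrix.trace_diagonal, Fin.sum_univ_two]
    simp only [Matrix.cons_val_zero, Matrix.cons_val_one, Matrix.head_cons]
    exact_mod_cast hsum
  have hp' : ((p : ℝ) : ℂ) ≠ 0 := by exact_mod_cast hp.ne'
  rw [hexp', Matrix.trace_smul, htrρ, smul_eq_mul, mul_one, inv_inv, smul_smul,
    mul_inv_cancel₀ hp', one_smul]

/-- `!![0,1;1,0]` conjugation swaps diagonal entries. -/
lemma swap_conj (a b : ℂ) :
    (!![0,1;1,0] : Matrix (Fin 2) (Fin 2) ℂ) * diagonal ![a, b] *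
      (!![0,1;1,0] : Matrix (Fin 2) (Fin 2) ℂ)ᴴ = diagonal ![b, a] := by
  ext i j
  fin_cases i <;> fin_cases j <;>
    simp [Matrix.mul_apply, Fin.sum_univ_two, Matrix.diagonal_apply, Matrix.vecHead,
      Matrix.vecTail, Matrix.vecMul, dotProduct]

lemma swap_unitary :
    (!![0,1;1,0] : Matrix (Fin 2) (Fin 2) ℂ) * (!![0,1;1,0] : Matrix (Fin 2) (Fin 2) ℂ)ᴴ = 1
    ∧ (!![0,1;1,0] : Matrix (Fin 2) (Fin 2) ℂ)ᴴ * (!![0,1;1,0] : Matrix (Fin 2) (Fin 2) ℂ) = 1 := by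
  constructor <;> (ext i j; fin_cases i <;> fin_cases j <;>
    simp [Matrix.mul_apply, Fin.sum_univ_two, Matrix.one_apply])

/-- Any NMM thermal state is a Gibbs state of a PSD Hamiltonian `V diag(0,ε) Vᴴ`. -/
lemma key (β : ℝ) (hβ : 0 < β) (ρ : Matrix (Fin 2) (Fin 2) ℂ)
    (hρ : ρ.PosDef) (htr : ρ.trace = 1)
    (hne : ρ ≠ (1/2 : ℂ) • (1 : Matrix (Fin 2) (Fin 2) ℂ)) :
    ∃ (V : Matrix (Fin 2) (Fin 2) ℂ) (ε : ℝ), 0 < ε ∧ V * Vᴴ = 1 ∧ Vᴴ * V = 1 ∧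
      ρ = ((exp (-((β : ℂ) • (V * diagonal ![0, (ε : ℂ)] * Vᴴ)))).trace)⁻¹ •
            exp (-((β : ℂ) • (V * diagonal ![0, (ε : ℂ)] * Vᴴ))) := by
  have hH := hρ.1
  set U : Matrix (Fin 2) (Fin 2) ℂ := (hH.eigenvectorUnitary : Matrix (Fin 2) (Fin 2) ℂ) with hU
  have hU1 : U * Uᴴ = 1 := by
    have := (Matrix.mem_unitaryGroup_iff).mp (hH.eigenvectorUnitary).2
    simpa [Matrix.star_eq_conjTranspose] using this
  have hU2 : Uᴴ * U = 1 := by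
    have := (Matrix.mem_unitaryGroup_iff').mp (hH.eigenvectorUnitary).2
    simpa [Matrix.star_eq_conjTranspose] using this
  set μ := hH.eigenvalues with hμ
  have hspec : ρ = U * diagonal (fun i => (μ i : ℂ)) * Uᴴ := by
    have := hH.spectral_theorem
    exact this
  have hpos : ∀ i, 0 < μ i := fun i => hρ.eigenvalues_pos i
  have hsum : μ 0 + μ 1 = 1 := by
    have h1 : ρ.trace = (μ 0 : ℂ) + (μ 1 : ℂ) := by
      rw [hspec, trace_conj_eq hU2, Matrix.trace_diagonal, Fin.sum_univ_two]
    rw [htr] at h1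
    exact_mod_cast h1.symm
  have hne' : μ 0 ≠ μ 1 := by
    intro h
    apply hne
    have hhalf : μ 0 = 1/2 := by linarith [hsum, h]
    have : (fun i => (μ i : ℂ)) = fun _ => ((1:ℂ)/2) := by
      funext i
      fin_cases i <;> simp [hhalf, ← h] <;> norm_num [hhalf]
    rw [hspec, this]
    have : diagonal (fun _ : Fin 2 => ((1:ℂ)/2)) = (1/2 : ℂ) • 1 := by
      ext i j
      by_cases h' : i = j <;> simp [Matrix.diagonal_apply, Matrix.one_apply, h']
    rw [this, Matrix.mul_smul, Matrix.smul_mul, mul_one, hU1]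
  have hdiagfun : (fun i => (μ i : ℂ)) = ![(μ 0 : ℂ), (μ 1 : ℂ)] := by
    funext i; fin_cases i <;> simp
  rcases lt_or_gt_of_ne hne' with hlt | hgt
  · -- μ 0 < μ 1 : use V = U * S
    set S : Matrix (Fin 2) (Fin 2) ℂ := !![0,1;1,0] with hS
    refine ⟨U * S, ?_⟩
    have hρ' : ρ = (U * S) * diagonal ![(μ 1 : ℂ), (μ 0 : ℂ)] * (U * S)ᴴ := by
      rw [Matrix.conjTranspose_mul]
      calc ρ = U * diagonal (fun i => (μ i : ℂ)) * Uᴴ := hspec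
      _ = U * (S * diagonal ![(μ 1 : ℂ), (μ 0 : ℂ)] * Sᴴ) * Uᴴ := by
          rw [hS, swap_conj, ← hdiagfun]
      _ = U * S * diagonal ![(μ 1 : ℂ), (μ 0 : ℂ)] * (Sᴴ * Uᴴ) := by
          noncomm_ring
    have hV1 : (U * S) * (U * S)ᴴ = 1 := by
      rw [Matrix.conjTranspose_mul]
      calc U * S * (Sᴴ * Uᴴ) = U * (S * Sᴴ) * Uᴴ := by noncomm_ring
      _ = 1 := by rw [hS, (swap_unitary).1, mul_one, hU1]
    have hV2 : (U * S)ᴴ * (U * S) = 1 := by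
      rw [Matrix.conjTranspose_mul]
      calc Sᴴ * Uᴴ * (U * S) = Sᴴ * (Uᴴ * U) * S := by noncomm_ring
      _ = 1 := by rw [hU2, mul_one, hS, (swap_unitary).2]
    obtain ⟨ε, hε, hfin⟩ := key' β hβ ρ (U * S) (μ 1) (μ 0) (hpos 0) hlt
      (by linarith [hsum]) hV1 hV2 hρ'
    exact ⟨ε, hε, hV1, hV2, hfin⟩
  · -- μ 1 < μ 0 : use V = U
    refine ⟨U, ?_⟩
    have hρ' : ρ = U * diagonal ![(μ 0 : ℂ), (μ 1 : ℂ)] * Uᴴ := by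
      rw [hspec, hdiagfun]
    obtain ⟨ε, hε, hfin⟩ := key' β hβ ρ U (μ 0) (μ 1) (hpos 1) hgt hsum hU1 hU2 hρ'
    exact ⟨ε, hε, hU1, hU2, hfin⟩

end NMMAux

/-- Proposition 2: any two non-maximally mixed thermal states `ρ₁, ρ₂` on `M₂(ℂ)`
(positive definite density matrices different from `(1/2)·1₂`) are mapped to each other by
the action of `SL(2,ℂ)` on their thermal Hamiltonians: there are a Hamiltonian `H₁` with
spectrum `{0, ε > 0}` and `Λ ∈ SL(2,ℂ)` with `ρ₁ = exp(−βH₁)/tr(exp(−βH₁))` and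
`ρ₂ = exp(−β ΛH₁Λᴴ)/tr(exp(−β ΛH₁Λᴴ))`. -/
theorem nmm_thermal_states_lorentz_related
    (ρ₁ ρ₂ : Matrix (Fin 2) (Fin 2) ℂ)
    (hρ₁ : ρ₁.PosDef) (hρ₁tr : ρ₁.trace = 1)
    (hρ₂ : ρ₂.PosDef) (hρ₂tr : ρ₂.trace = 1)
    (hρ₁ne : ρ₁ ≠ (1/2 : ℂ) • (1 : Matrix (Fin 2) (Fin 2) ℂ))
    (hρ₂ne : ρ₂ ≠ (1/2 : ℂ) • (1 : Matrix (Fin 2) (Fin 2) ℂ))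
    (β : ℝ) (hβ : 0 < β) :
    ∃ (H₁ Λ : Matrix (Fin 2) (Fin 2) ℂ),
      H₁.IsHermitian ∧ H₁.PosSemidef ∧ H₁.det = 0 ∧ 0 < H₁.trace.re ∧
      Λ.det = 1 ∧
      ρ₁ = ((exp (-((β : ℂ) • H₁))).trace)⁻¹ • exp (-((β : ℂ) • H₁)) ∧
      ρ₂ = ((exp (-((β : ℂ) • (Λ * H₁ * Λᴴ)))).trace)⁻¹ •
              exp (-((β : ℂ) • (Λ * H₁ * Λᴴ))) := by
  obtain ⟨V₁, ε₁, hε₁, hV₁1, hV₁2, heq₁⟩ := NMMAux.key β hβ ρ₁ hρ₁ hρ₁tr hρ₁ne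
  obtain ⟨V₂, ε₂, hε₂, hV₂1, hV₂2, heq₂⟩ := NMMAux.key β hβ ρ₂ hρ₂ hρ₂tr hρ₂ne
  set D₁ : Matrix (Fin 2) (Fin 2) ℂ := diagonal ![0, (ε₁ : ℂ)] with hD₁
  set D₂ : Matrix (Fin 2) (Fin 2) ℂ := diagonal ![0, (ε₂ : ℂ)] with hD₂
  set H₁ : Matrix (Fin 2) (Fin 2) ℂ := V₁ * D₁ * V₁ᴴ with hH₁
  -- phase factor
  have hdet1 : V₁.det * star V₁.det = 1 := NMMAux.det_mul_star_det hV₁1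
  have hdet2 : V₂.det * star V₂.det = 1 := NMMAux.det_mul_star_det hV₂1
  set u : ℂ := V₂.det * star V₁.det with hu_def
  have hu : u * star u = 1 := by
    have h : u * star u = (V₂.det * star V₂.det) * (V₁.det * star V₁.det) := by
      rw [hu_def, star_mul', star_star]; ring
    rw [h, hdet1, hdet2, one_mul]
  have hu0 : u ≠ 0 := by
    intro h; rw [h, zero_mul] at hu; exact zero_ne_one hu
  obtain ⟨c, hc⟩ := IsAlgClosed.exists_pow_nat_eq (k := ℂ) u⁻¹ (n := 2) (by norm_num)
  have hcc : c * star c = 1 := by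
    have h1 : (c * star c) ^ 2 = u⁻¹ * star u⁻¹ := by
      rw [mul_pow, hc, ← star_pow, hc]
    have h2 : u⁻¹ * star u⁻¹ = 1 := by
      rw [star_inv₀, ← mul_inv, hu, inv_one]
    have h3 : ((Complex.normSq c : ℝ) : ℂ) ^ 2 = 1 := by
      rw [← Complex.mul_conj, ← RCLike.star_def, h1, h2]
    have h4 : (Complex.normSq c) ^ 2 = 1 := by exact_mod_cast h3
    have h5 : Complex.normSq c = 1 := by nlinarith [Complex.normSq_nonneg c]
    rw [RCLike.star_def, Complex.mul_conj, h5, Complex.ofReal_one]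
  set a : ℝ := Real.sqrt (ε₂ / ε₁) with ha_def
  have ha : 0 < a := Real.sqrt_pos.mpr (div_pos hε₂ hε₁)
  have ha2 : a ^ 2 = ε₂ / ε₁ := Real.sq_sqrt (le_of_lt (div_pos hε₂ hε₁))
  have haC : ((a : ℝ) : ℂ) ≠ 0 := by exact_mod_cast ha.ne'
  set M : Matrix (Fin 2) (Fin 2) ℂ := diagonal ![c / (a : ℂ), c * (a : ℂ)] with hM
  set Λ : Matrix (Fin 2) (Fin 2) ℂ := V₂ * M * V₁ᴴ with hΛ
  -- det Λ = 1
  have hMdet : M.det = c ^ 2 := by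
    rw [hM, Matrix.det_diagonal, Fin.prod_univ_two]
    simp only [Matrix.cons_val_zero, Matrix.cons_val_one, Matrix.head_cons]
    field_simp
  have hΛdet : Λ.det = 1 := by
    rw [hΛ, Matrix.det_mul, Matrix.det_mul, hMdet, hc, Matrix.det_conjTranspose]
    calc V₂.det * u⁻¹ * star V₁.det = (V₂.det * star V₁.det) * u⁻¹ := by ring
    _ = u * u⁻¹ := by rw [← hu_def]
    _ = 1 := mul_inv_cancel₀ hu0
  -- conjugation sends H₁ to H₂
  have hentry : c * ((a : ℝ) : ℂ) * ((ε₁ : ℝ) : ℂ) * star (c * ((a : ℝ) : ℂ)) = ((ε₂ : ℝ) : ℂ) := by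
    have hstar : star (c * ((a : ℝ) : ℂ)) = star c * ((a : ℝ) : ℂ) := by
      rw [RCLike.star_def, RingHom.map_mul, Complex.conj_ofReal]
    rw [hstar]
    have h6 : c * ((a : ℝ) : ℂ) * ((ε₁ : ℝ) : ℂ) * (star c * ((a : ℝ) : ℂ))
        = (c * star c) * ((((a : ℝ) : ℂ) ^ 2) * ((ε₁ : ℝ) : ℂ)) := by ring
    rw [h6, hcc, one_mul]
    have hre : a ^ 2 * ε₁ = ε₂ := by rw [ha2]; field_simp
    push_cast [← hre]
    ring
  have hMDM : M * D₁ * Mᴴ = D₂ := by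
    rw [hM, hD₁, hD₂, Matrix.diagonal_conjTranspose, Matrix.diagonal_mul_diagonal,
      Matrix.diagonal_mul_diagonal]
    ext i j
    fin_cases i <;> fin_cases j <;>
      simp [Matrix.diagonal_apply]
    calc c * (a : ℂ) * (ε₁ : ℂ) * ((starRingEnd ℂ) c * (a : ℂ))
        = c * ((a : ℝ) : ℂ) * ((ε₁ : ℝ) : ℂ) * star (c * ((a : ℝ) : ℂ)) := by
          rw [RCLike.star_def, RingHom.map_mul, Complex.conj_ofReal]
      _ = ((ε₂ : ℝ) : ℂ) := hentry
  have hconjH : Λ * H₁ * Λᴴ = V₂ * D₂ * V₂ᴴ := by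
    have e1 : Λᴴ = V₁ * Mᴴ * V₂ᴴ := by
      rw [hΛ, Matrix.conjTranspose_mul, Matrix.conjTranspose_mul,
        Matrix.conjTranspose_conjTranspose, mul_assoc]
    rw [e1, hΛ, hH₁]
    have e2 : V₂ * M * V₁ᴴ * (V₁ * D₁ * V₁ᴴ) * (V₁ * Mᴴ * V₂ᴴ)
        = V₂ * (M * ((V₁ᴴ * V₁) * D₁ * (V₁ᴴ * V₁)) * Mᴴ) * V₂ᴴ := by
      noncomm_ring
    rw [e2, hV₁2, one_mul, mul_one, hMDM]
  -- properties of H₁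
  have hD₁herm : D₁ᴴ = D₁ := by
    rw [hD₁, Matrix.diagonal_conjTranspose]
    ext i j
    fin_cases i <;> fin_cases j <;> simp [Matrix.diagonal_apply]
  have hH₁psd : H₁.PosSemidef := by
    refine Matrix.PosSemidef.mul_mul_conjTranspose_same ?_ V₁
    refine Matrix.posSemidef_diagonal_iff.mpr fun i => ?_
    fin_cases i
    · simp
    · show (0 : ℂ) ≤ ((ε₁ : ℝ) : ℂ)
      exact_mod_cast hε₁.le
  have hH₁herm : H₁.IsHermitian := hH₁psd.isHermitian
  have hH₁det : H₁.det = 0 := by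
    rw [hH₁, Matrix.det_mul, Matrix.det_mul, hD₁, Matrix.det_diagonal, Fin.prod_univ_two]
    simp
  have hH₁tr : 0 < H₁.trace.re := by
    rw [hH₁, NMMAux.trace_conj_eq hV₁2, hD₁, Matrix.trace_diagonal, Fin.sum_univ_two]
    simpa using hε₁
  refine ⟨H₁, Λ, hH₁herm, hH₁psd, hH₁det, hH₁tr, hΛdet, heq₁, ?_⟩
  rw [hconjH]
  exact heq₂
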